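/- Let D be the ℚ-linear operator on the polynomial ring ℚ[x] defined by D(P) = x · (dP/dx). For every integer d ≥ 0: the evaluation at x = 1 of D^i applied to the polynomial (1 - x)^d equals 0 for every i with 0 ≤ i < d, and the evaluation at x = 1 of D^d applied to (1 - x)^d equals (-1)^d · d!. -/
import Mathlib


open Polynomial

/-- The operator `D` on `ℚ[x]` given by `D(P) = x · dP/dx`.  (It is `ℚ`-linear,
being the composition of the linear operators `derivative` and multiplication by `X`.) -/
noncomputable def Dop (P : Polynomial ℚ) : Polynomial ℚ := X * derivative P

lemma Dop_key (d : ℕ) : ∀ i ≤ d, ∃ Q : Polynomial ℚ,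
    Dop^[i] ((1 - X) ^ d) = (1 - X) ^ (d - i) * Q ∧
    Q.eval 1 = (-1 : ℚ) ^ i * (d.descFactorial i : ℚ) := by
  intro i
  induction i with
  | zero => intro _; exact ⟨1, by simp⟩
  | succ i ih =>
    intro hi
    obtain ⟨Q, hQ, hQ1⟩ := ih (Nat.le_of_succ_le hi)
    refine ⟨X * (-(((d - i : ℕ) : Polynomial ℚ)) * Q + (1 - X) * derivative Q), ?_, ?_⟩
    · rw [Function.iterate_succ_apply', hQ, Dop]
      have hk : d - i = (d - (i + 1)) + 1 := by omega
      rw [hk, derivative_mul, derivative_pow, Nat.add_sub_cancel]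
      simp only [derivative_sub, derivative_one, derivative_X, zero_sub]
      ring_nf
      rw [Polynomial.C_eq_natCast]; ring
    · have hsub : ((d - i : ℕ) : ℚ) = (d : ℚ) - i := by
        push_cast [Nat.cast_sub (Nat.le_of_succ_le hi)]; ring
      simp only [eval_mul, eval_add, eval_neg, eval_natCast, eval_one, eval_sub, eval_X,
        sub_self, zero_mul, add_zero, one_mul]
      rw [hQ1, Nat.descFactorial_succ, hsub]
      push_cast [Nat.cast_sub (Nat.le_of_succ_le hi)]
      ring

/-- For every `d ≥ 0`: the evaluation at `x = 1` of `D^i ((1-x)^d)`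
equals `0` for every `0 ≤ i < d`, and the evaluation at `x = 1` of `D^d ((1-x)^d)`
equals `(-1)^d · d!`. -/
theorem Dop_iterate_one_sub_X_pow (d : ℕ) :
    (∀ i : ℕ, i < d → (Dop^[i] ((1 - X) ^ d)).eval 1 = 0) ∧
      (Dop^[d] ((1 - X) ^ d)).eval 1 = (-1 : ℚ) ^ d * d.factorial := by
  constructor
  · intro i hi
    obtain ⟨Q, hQ, _⟩ := Dop_key d i hi.le
    rw [hQ]
    have : d - i ≠ 0 := by omega
    simp [eval_pow, zero_pow this]
  · obtain ⟨Q, hQ, hQ1⟩ := Dop_key d d le_rfl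
    rw [hQ]
    simp [hQ1, Nat.descFactorial_self]
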